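/- arXiv:1201.0496 — 4 statements merged into one kernel-verified Lean document; each statement's English description precedes it below -/
import Mathlib

section
/- Let w₀ ∈ Sₙ be the longest element, w₀(k) = n+1−k, and let (i₁,…,i_ℓ) be any reduced word for w₀. Then σ(i₁,…,i_ℓ)² = (−1)^{n−1}·I, which is a central element of GL(n,ℂ). -/
open Matrix

noncomputable section

/-- The element `i` of `{1,…,n−1}` viewed in `Fin n` (0-indexed: position `i`). -/
def finA {n : ℕ} (i : Fin (n - 1)) : Fin n := ⟨i.val, by have := i.isLt; omega⟩

/-- The element `i+1` of `{1,…,n}` viewed in `Fin n` (0-indexed: position `i+1`). -/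
def finB {n : ℕ} (i : Fin (n - 1)) : Fin n := ⟨i.val + 1, by have := i.isLt; omega⟩

/-- The Tits representative `σ_i ∈ GL(n,ℂ)` of the simple reflection `s_i = (i,i+1)`:
it agrees with the identity matrix except in rows and columns `i, i+1`, where its entries
are `(σ_i)_{i,i} = (σ_i)_{i+1,i+1} = 0`, `(σ_i)_{i,i+1} = 1`, `(σ_i)_{i+1,i} = −1`. -/
def sigmaMat (n : ℕ) (i : Fin (n - 1)) : Matrix (Fin n) (Fin n) ℂ :=
  1 - single (finA i) (finA i) 1 - single (finB i) (finB i) 1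
    + single (finA i) (finB i) 1 - single (finB i) (finA i) 1

/-- The simple reflection `s_i = (i,i+1)` in the symmetric group `Sₙ`. -/
def simpleRefl {n : ℕ} (i : Fin (n - 1)) : Equiv.Perm (Fin n) := Equiv.swap (finA i) (finB i)

/-- The permutation `s_{i₁} ∘ ⋯ ∘ s_{i_ℓ}` attached to the word `(i₁,…,i_ℓ)`. -/
def wordPerm {n : ℕ} (l : List (Fin (n - 1))) : Equiv.Perm (Fin n) :=
  (l.map simpleRefl).prod

/-- The matrix `σ(i₁,…,i_ℓ) = σ_{i₁} ⋯ σ_{i_ℓ}` attached to the word `(i₁,…,i_ℓ)`. -/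
def wordMat (n : ℕ) (l : List (Fin (n - 1))) : Matrix (Fin n) (Fin n) ℂ :=
  (l.map (sigmaMat n)).prod

/-- The Coxeter length of `w ∈ Sₙ`: the number of inversions. -/
def invCount {n : ℕ} (w : Equiv.Perm (Fin n)) : ℕ :=
  (Finset.univ.filter fun p : Fin n × Fin n => p.1 < p.2 ∧ w p.2 < w p.1).card

/-- `(i₁,…,i_ℓ)` is a reduced word for `w`: the product of the corresponding simple
reflections is `w` and the length of the word equals the number of inversions of `w`. -/
def IsReducedWord {n : ℕ} (l : List (Fin (n - 1))) (w : Equiv.Perm (Fin n)) : Prop :=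
  wordPerm l = w ∧ l.length = invCount w

/-- The diagonal matrix `d` with entries `d_{kk} = (−1)^{k−1}` (1-indexed), used in the
pinned Chevalley involution `C_P(g) = d (gᵀ)⁻¹ d⁻¹` of `GL(n,ℂ)`. -/
def dMat (n : ℕ) : Matrix (Fin n) (Fin n) ℂ := Matrix.diagonal fun k => (-1 : ℂ) ^ (k : ℕ)

end

namespace TitsAux
variable {n : ℕ}

variable {n : ℕ}

lemma finA_lt_finB (i : Fin (n-1)) : finA i < finB i := by
  simp [finA, finB, Fin.lt_def]

lemma swap_a (i : Fin (n-1)) : simpleRefl i (finA i) = finB i := Equiv.swap_apply_left _ _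
lemma swap_b (i : Fin (n-1)) : simpleRefl i (finB i) = finA i := Equiv.swap_apply_right _ _
lemma swap_other (i : Fin (n-1)) {k : Fin n} (h1 : k ≠ finA i) (h2 : k ≠ finB i) :
    simpleRefl i k = k := Equiv.swap_apply_of_ne_of_ne h1 h2

def invAfter (w : Equiv.Perm (Fin n)) (k : Fin n) : ℕ :=
  (Finset.univ.filter fun j => k < j ∧ w j < w k).card

noncomputable def spMat (n : ℕ) (w : Equiv.Perm (Fin n)) : Matrix (Fin n) (Fin n) ℂ :=
  Matrix.of fun j k => if w k = j then (-1 : ℂ) ^ invAfter w k else 0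

lemma lt_swap_iff (i : Fin (n-1)) {k x : Fin n} (hka : k ≠ finA i) (hkb : k ≠ finB i) :
    k < x ↔ k < simpleRefl i x := by
  have hb : (finA i : Fin n).val + 1 = (finB i : Fin n).val := rfl
  simp only [simpleRefl, Equiv.swap_apply_def]
  split_ifs with h h' <;>
    simp only [Fin.lt_def, Fin.ext_iff, ne_eq] at * <;> omega

lemma mul_sigmaMat_apply (A : Matrix (Fin n) (Fin n) ℂ) (i : Fin (n-1)) (j k : Fin n) :
    (A * sigmaMat n i) j k =
      if k = finA i then -A j (finB i) else if k = finB i then A j (finA i) else A j k := by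
  have hab : finA i ≠ finB i := ne_of_lt (finA_lt_finB i)
  rw [sigmaMat, Matrix.mul_sub, Matrix.mul_add, Matrix.mul_sub, Matrix.mul_sub, Matrix.mul_one]
  by_cases h1 : k = finA i
  · subst h1
    simp [Matrix.sub_apply, Matrix.add_apply, hab, hab.symm]
  · by_cases h2 : k = finB i
    · subst h2
      simp [Matrix.sub_apply, Matrix.add_apply, hab, hab.symm, h1]
    · simp [Matrix.sub_apply, Matrix.add_apply, h1, h2, Ne.symm h1, Ne.symm h2]

lemma invAfter_mul_a (i : Fin (n-1)) (w : Equiv.Perm (Fin n))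
    (h : w (finA i) < w (finB i)) :
    invAfter (w * simpleRefl i) (finA i) = invAfter w (finB i) + 1 := by
  have hab : finA i < finB i := finA_lt_finB (n := n) i
  have hb : (finA i : Fin n).val + 1 = (finB i : Fin n).val := rfl
  have key : (Finset.univ.filter fun j => finA i < j ∧ (w * simpleRefl i) j < (w * simpleRefl i) (finA i))
      = insert (finB i) (Finset.univ.filter fun j => finB i < j ∧ w j < w (finB i)) := by
    ext j
    simp only [Finset.mem_insert, Finset.mem_filter, Finset.mem_univ, true_and,
      Equiv.Perm.mul_apply, swap_a]
    constructor
    · rintro ⟨hj, hw⟩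
      by_cases hjb : j = finB i
      · exact Or.inl hjb
      · have hbj : finB i < j := by
          rw [Fin.lt_def] at hj ⊢
          rw [Fin.ext_iff] at hjb
          omega
        have : simpleRefl i j = j := swap_other i (ne_of_gt (lt_trans hab hbj)) (Ne.symm (ne_of_lt hbj))
        rw [this] at hw
        exact Or.inr ⟨hbj, hw⟩
    · rintro (rfl | ⟨hbj, hw⟩)
      · exact ⟨hab, by rw [swap_b]; exact h⟩
      · have : simpleRefl i j = j := swap_other i (ne_of_gt (lt_trans hab hbj)) (Ne.symm (ne_of_lt hbj))
        exact ⟨lt_trans hab hbj, by rw [this]; exact hw⟩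
  rw [invAfter, key, Finset.card_insert_of_notMem (by simp), invAfter]

lemma invAfter_mul_b (i : Fin (n-1)) (w : Equiv.Perm (Fin n))
    (h : w (finA i) < w (finB i)) :
    invAfter (w * simpleRefl i) (finB i) = invAfter w (finA i) := by
  have hab : finA i < finB i := finA_lt_finB (n := n) i
  have key : (Finset.univ.filter fun j => finB i < j ∧ (w * simpleRefl i) j < (w * simpleRefl i) (finB i))
      = Finset.univ.filter fun j => finA i < j ∧ w j < w (finA i) := by
    ext j
    simp only [Finset.mem_filter, Finset.mem_univ, true_and, Equiv.Perm.mul_apply, swap_b]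
    constructor
    · rintro ⟨hbj, hw⟩
      have : simpleRefl i j = j := swap_other i (ne_of_gt (lt_trans hab hbj)) (Ne.symm (ne_of_lt hbj))
      rw [this] at hw
      exact ⟨lt_trans hab hbj, hw⟩
    · rintro ⟨haj, hw⟩
      have hjb : j ≠ finB i := by
        rintro rfl
        exact absurd (lt_trans hw h) (lt_irrefl _)
      have hbj : finB i < j := by
        rw [Fin.lt_def] at haj ⊢
        simp only [ne_eq, Fin.ext_iff] at hjb
        have hb : (finA i : Fin n).val + 1 = (finB i : Fin n).val := rfl
        omega
      have : simpleRefl i j = j := swap_other i (ne_of_gt (lt_trans hab hbj)) hjb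
      exact ⟨hbj, by rw [this]; exact hw⟩
  rw [invAfter, key, invAfter]

lemma invAfter_mul_other (i : Fin (n-1)) (w : Equiv.Perm (Fin n)) {k : Fin n}
    (hka : k ≠ finA i) (hkb : k ≠ finB i) :
    invAfter (w * simpleRefl i) k = invAfter w k := by
  have hk : (w * simpleRefl i) k = w k := by
    rw [Equiv.Perm.mul_apply, swap_other i hka hkb]
  have key : (Finset.univ.filter fun j => k < j ∧ (w * simpleRefl i) j < (w * simpleRefl i) k)
      = (Finset.univ.filter fun j => k < j ∧ w j < w k).image (simpleRefl i) := by
    ext x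
    simp only [Finset.mem_filter, Finset.mem_univ, true_and, Finset.mem_image,
      Equiv.Perm.mul_apply, hk]
    constructor
    · rintro ⟨hkx, hw⟩
      exact ⟨simpleRefl i x, ⟨(lt_swap_iff i hka hkb).mp hkx, hw⟩, Equiv.swap_apply_self _ _ _⟩
    · rintro ⟨y, ⟨hky, hw⟩, rfl⟩
      refine ⟨(lt_swap_iff i hka hkb).mp hky, ?_⟩
      rw [show simpleRefl i (simpleRefl i y) = y from Equiv.swap_apply_self _ _ _]
      exact hw
  rw [invAfter, key, Finset.card_image_of_injective _ (simpleRefl i).injective, invAfter]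

lemma spMat_mul_sigmaMat (i : Fin (n-1)) (w : Equiv.Perm (Fin n))
    (h : w (finA i) < w (finB i)) :
    spMat n w * sigmaMat n i = spMat n (w * simpleRefl i) := by
  ext j k
  rw [mul_sigmaMat_apply]
  by_cases h1 : k = finA i
  · subst h1
    rw [if_pos rfl]
    show -(spMat n w j (finB i)) = _
    simp only [spMat, Matrix.of_apply, Equiv.Perm.mul_apply, swap_a,
      invAfter_mul_a i w h]
    by_cases hj : w (finB i) = j
    · simp [hj, pow_succ]
    · simp [hj]
  · by_cases h2 : k = finB i
    · subst h2
      simp only [if_neg h1, if_pos rfl]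
      show spMat n w j (finA i) = _
      simp only [spMat, Matrix.of_apply, Equiv.Perm.mul_apply, swap_b,
        invAfter_mul_b i w h]
    · simp only [if_neg h1, if_neg h2]
      show spMat n w j k = _
      simp only [spMat, Matrix.of_apply, Equiv.Perm.mul_apply, swap_other i h1 h2,
        invAfter_mul_other i w h1 h2]

lemma invAfter_one (k : Fin n) : invAfter (1 : Equiv.Perm (Fin n)) k = 0 := by
  rw [invAfter, Finset.card_eq_zero, Finset.filter_eq_empty_iff]
  rintro j -
  simp only [Equiv.Perm.one_apply]
  rintro ⟨h1, h2⟩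
  exact absurd h2 (asymm h1)

lemma spMat_one : spMat n 1 = 1 := by
  ext j k
  simp only [spMat, Matrix.of_apply, Equiv.Perm.one_apply, invAfter_one, pow_zero,
    Matrix.one_apply]
  rcases eq_or_ne j k with rfl | hjk
  · simp
  · simp [hjk, Ne.symm hjk]


variable {n : ℕ}


lemma prod_lt_swap_iff (i : Fin (n-1)) {p q : Fin n}
    (h1 : ¬(p = finA i ∧ q = finB i)) (h2 : ¬(p = finB i ∧ q = finA i)) :
    p < q ↔ simpleRefl i p < simpleRefl i q := by
  have hb : (finA i : Fin n).val + 1 = (finB i : Fin n).val := rfl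
  simp only [simpleRefl, Equiv.swap_apply_def]
  split_ifs <;>
    simp only [Fin.lt_def, Fin.ext_iff, ne_eq, not_and] at * <;> omega

lemma swap_swap (i : Fin (n-1)) (x : Fin n) : simpleRefl i (simpleRefl i x) = x :=
  Equiv.swap_apply_self _ _ _

lemma invCount_mul_simpleRefl (i : Fin (n-1)) (w : Equiv.Perm (Fin n))
    (h : w (finA i) < w (finB i)) :
    invCount (w * simpleRefl i) = invCount w + 1 := by
  classical
  have hab : finA i < finB i := finA_lt_finB (n := n) i
  have key : (Finset.univ.filter fun p : Fin n × Fin n =>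
        p.1 < p.2 ∧ (w * simpleRefl i) p.2 < (w * simpleRefl i) p.1)
      = insert (finA i, finB i)
          ((Finset.univ.filter fun p : Fin n × Fin n => p.1 < p.2 ∧ w p.2 < w p.1).image
            (fun p => (simpleRefl i p.1, simpleRefl i p.2))) := by
    ext ⟨p, q⟩
    rw [Finset.mem_filter]
    simp only [Finset.mem_insert, Finset.mem_image, Finset.mem_filter, Finset.mem_univ,
      true_and, Prod.mk.injEq, Prod.exists, Equiv.Perm.mul_apply]
    constructor
    · rintro ⟨hpq, hw⟩
      by_cases hc : p = finA i ∧ q = finB i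
      · exact Or.inl hc
      · have hc2 : ¬(p = finB i ∧ q = finA i) := by
          rintro ⟨rfl, rfl⟩; exact absurd hpq (asymm hab)
        refine Or.inr ⟨simpleRefl i p, simpleRefl i q,
          ⟨(prod_lt_swap_iff i hc hc2).mp hpq, by simpa [swap_swap] using hw⟩,
          swap_swap i p, swap_swap i q⟩
    · rintro (⟨rfl, rfl⟩ | ⟨x, y, ⟨hxy, hw⟩, rfl, rfl⟩)
      · exact ⟨hab, by simpa [simpleRefl, Equiv.swap_apply_left, Equiv.swap_apply_right] using h⟩
      · have hc : ¬(x = finA i ∧ y = finB i) := by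
          rintro ⟨rfl, rfl⟩; exact absurd hw (asymm h)
        have hc2 : ¬(x = finB i ∧ y = finA i) := by
          rintro ⟨rfl, rfl⟩; exact absurd hxy (asymm hab)
        exact ⟨(prod_lt_swap_iff i hc hc2).mp hxy, by simpa [swap_swap] using hw⟩
  have hinj : Function.Injective (fun p : Fin n × Fin n => (simpleRefl i p.1, simpleRefl i p.2)) := by
    intro p q hpq
    simp only [Prod.mk.injEq] at hpq
    exact Prod.ext ((simpleRefl i).injective hpq.1) ((simpleRefl i).injective hpq.2)
  have hnot : (finA i, finB i) ∉
      ((Finset.univ.filter fun p : Fin n × Fin n => p.1 < p.2 ∧ w p.2 < w p.1).image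
        (fun p => (simpleRefl i p.1, simpleRefl i p.2))) := by
    simp only [Finset.mem_image, Finset.mem_filter, Finset.mem_univ, true_and,
      Prod.mk.injEq, Prod.exists, not_exists]
    rintro x y ⟨⟨hxy, -⟩, hx, hy⟩
    have hxB : x = finB i := by
      have := congrArg (simpleRefl i) hx
      simpa [swap_swap, simpleRefl, Equiv.swap_apply_left] using this
    have hyA : y = finA i := by
      have := congrArg (simpleRefl i) hy
      simpa [swap_swap, simpleRefl, Equiv.swap_apply_right] using this
    rw [hxB, hyA] at hxy
    exact absurd hxy (asymm hab)
  rw [invCount, key, Finset.card_insert_of_notMem hnot,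
    Finset.card_image_of_injective _ hinj, invCount]



lemma invCount_mul_simpleRefl' (i : Fin (n-1)) (w : Equiv.Perm (Fin n))
    (h : w (finB i) < w (finA i)) :
    invCount w = invCount (w * simpleRefl i) + 1 := by
  have hprod : (w * simpleRefl i) * simpleRefl i = w := by
    rw [mul_assoc, simpleRefl, Equiv.swap_mul_self, mul_one]
  have := invCount_mul_simpleRefl i (w * simpleRefl i)
    (by simpa [Equiv.Perm.mul_apply, swap_a, swap_b] using h)
  rw [hprod] at this
  omega

lemma invCount_one : invCount (1 : Equiv.Perm (Fin n)) = 0 := by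
  rw [invCount, Finset.card_eq_zero, Finset.filter_eq_empty_iff]
  rintro p -
  simp only [Equiv.Perm.one_apply]
  rintro ⟨h1, h2⟩
  exact absurd h2 (asymm h1)

lemma wordPerm_append (l : List (Fin (n-1))) (i : Fin (n-1)) :
    wordPerm (l ++ [i]) = wordPerm l * simpleRefl i := by
  simp [wordPerm]

lemma invCount_wordPerm_le (l : List (Fin (n-1))) : invCount (wordPerm l) ≤ l.length := by
  induction l using List.reverseRecOn with
  | nil => simp [wordPerm, invCount_one]
  | append_singleton l i ih =>
    rw [wordPerm_append]
    have hne : wordPerm l (finA i) ≠ wordPerm l (finB i) :=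
      fun hcon => absurd ((wordPerm l).injective hcon) (ne_of_lt (finA_lt_finB i))
    rcases hne.lt_or_gt with h | h
    · have := invCount_mul_simpleRefl i (wordPerm l) h
      simp only [List.length_append, List.length_singleton]
      omega
    · have := invCount_mul_simpleRefl' i (wordPerm l) h
      simp only [List.length_append, List.length_singleton]
      omega


lemma wordMat_append (l : List (Fin (n-1))) (i : Fin (n-1)) :
    wordMat n (l ++ [i]) = wordMat n l * sigmaMat n i := by
  simp [wordMat]

lemma wordMat_reduced (l : List (Fin (n-1))) (hl : l.length = invCount (wordPerm l)) :
    wordMat n l = spMat n (wordPerm l) := by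
  induction l using List.reverseRecOn with
  | nil => simp only [wordMat, wordPerm, List.map_nil, List.prod_nil, spMat_one]
  | append_singleton l i ih =>
    rw [wordPerm_append] at hl ⊢
    rw [wordMat_append]
    have hne : wordPerm l (finA i) ≠ wordPerm l (finB i) :=
      fun hcon => absurd ((wordPerm l).injective hcon) (ne_of_lt (finA_lt_finB i))
    have hle := invCount_wordPerm_le l
    rcases hne.lt_or_gt with h | h
    · have hc := invCount_mul_simpleRefl i (wordPerm l) h
      have hll : l.length = invCount (wordPerm l) := by
        simp only [List.length_append, List.length_singleton] at hl
        omega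
      rw [ih hll, spMat_mul_sigmaMat i (wordPerm l) h]
    · have hc := invCount_mul_simpleRefl' i (wordPerm l) h
      simp only [List.length_append, List.length_singleton] at hl
      omega

lemma invAfter_rev (k : Fin n) :
    invAfter (Fin.revPerm : Equiv.Perm (Fin n)) k = n - 1 - k.val := by
  have key : (Finset.univ.filter fun j =>
        k < j ∧ (Fin.revPerm : Equiv.Perm (Fin n)) j < (Fin.revPerm : Equiv.Perm (Fin n)) k)
      = Finset.Ioi k := by
    ext j
    simp [Fin.rev_lt_rev, and_self, Finset.mem_Ioi]
  rw [invAfter, key, Fin.card_Ioi]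

end TitsAux

/-- If `(i₁,…,i_ℓ)` is a reduced word for the longest element
`w₀ : k ↦ n+1−k` of `Sₙ`, then `σ(i₁,…,i_ℓ)² = (−1)^{n−1}·I`, a central element of
`GL(n,ℂ)`. -/
theorem tits_longest_element_square (n : ℕ) (hn : 1 ≤ n) (l : List (Fin (n - 1)))
    (hl : IsReducedWord l (Fin.revPerm : Equiv.Perm (Fin n))) :
    wordMat n l * wordMat n l = ((-1 : ℂ) ^ (n - 1)) • (1 : Matrix (Fin n) (Fin n) ℂ) ∧
    ∀ g : GL (Fin n) ℂ,
      ((-1 : ℂ) ^ (n - 1)) • (1 : Matrix (Fin n) (Fin n) ℂ) * (g : Matrix (Fin n) (Fin n) ℂ)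
        = (g : Matrix (Fin n) (Fin n) ℂ) *
            (((-1 : ℂ) ^ (n - 1)) • (1 : Matrix (Fin n) (Fin n) ℂ)) := by
  obtain ⟨hperm, hlen⟩ := hl
  have hmat : wordMat n l = TitsAux.spMat n (Fin.revPerm : Equiv.Perm (Fin n)) := by
    rw [← hperm] at hlen ⊢
    exact TitsAux.wordMat_reduced l hlen
  constructor
  · rw [hmat]
    ext j k
    rw [Matrix.mul_apply, Finset.sum_eq_single ((Fin.revPerm : Equiv.Perm (Fin n)) k)]
    · have h1 := k.isLt
      have h2 : (k.rev : ℕ) = n - (k.val + 1) := Fin.val_rev k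
      rcases eq_or_ne j k with rfl | hjk
      · simp only [TitsAux.spMat, Matrix.of_apply, Fin.revPerm_apply, Fin.rev_rev,
          TitsAux.invAfter_rev, Matrix.smul_apply, Matrix.one_apply, smul_eq_mul,
          if_true, eq_self_iff_true, mul_one, ← pow_add]
        congr 1
        omega
      · simp only [TitsAux.spMat, Matrix.of_apply, Fin.revPerm_apply, Fin.rev_rev,
          Matrix.smul_apply, Matrix.one_apply, smul_eq_mul]
        rw [if_neg (Ne.symm hjk), if_neg hjk, mul_zero, zero_mul]
    · intro m _ hm
      simp only [TitsAux.spMat, Matrix.of_apply]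
      rw [if_neg (show ¬((Fin.revPerm : Equiv.Perm (Fin n)) k = m) from fun hc => hm hc.symm),
        mul_zero]
    · intro hmem
      exact absurd (Finset.mem_univ _) hmem
  · intro g
    rw [smul_mul_assoc, one_mul, mul_smul_comm, mul_one]
end

section
/- Let w ∈ Sₙ, and let (i₁,…,i_ℓ) be a reduced word for w and (j₁,…,j_m) a reduced word for w⁻¹. Then C_P(σ(i₁,…,i_ℓ)) = (σ(j₁,…,j_m))⁻¹, i.e. d·(σ(i₁,…,i_ℓ)ᵀ)⁻¹·d⁻¹ = (σ(j₁,…,j_m))⁻¹. -/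
open Matrix

/-! ### Auxiliary development -/

noncomputable section ChevAux
variable {n : ℕ}

attribute [-simp] Equiv.Perm.coe_inv

@[simp] lemma Equiv.Perm.inv_apply_self {α : Type*} (f : Equiv.Perm α) (x : α) :
    f⁻¹ (f x) = x := f.symm_apply_apply x

@[simp] lemma Equiv.Perm.apply_inv_self {α : Type*} (f : Equiv.Perm α) (x : α) :
    f (f⁻¹ x) = x := f.apply_symm_apply x

lemma finA_lt_finB (i : Fin (n-1)) : finA i < finB i := by simp [finA, finB, Fin.lt_def]

lemma finA_ne_finB (i : Fin (n-1)) : finA i ≠ finB i := ne_of_lt (finA_lt_finB i)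

lemma swap_lt_iff (i : Fin (n-1)) (x y : Fin n)
    (hx : ¬(x = finA i ∧ y = finB i)) (hy : ¬(x = finB i ∧ y = finA i)) :
    (Equiv.swap (finA i) (finB i) x < Equiv.swap (finA i) (finB i) y ↔ x < y) := by
  have hA : ((finA i : Fin n) : ℕ) = i.val := rfl
  have hB : ((finB i : Fin n) : ℕ) = i.val + 1 := rfl
  simp only [Fin.ext_iff, hA, hB, not_and] at hx hy
  rw [Equiv.swap_apply_def, Equiv.swap_apply_def, Fin.lt_def]
  split_ifs with h1 h2 h3 h4 h5 h6 h7 h8 <;>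
    simp only [Fin.ext_iff, hA, hB, Fin.lt_def] at * <;> omega

lemma sigma_eq (i : Fin (n-1)) :
    sigmaMat n i = Matrix.of fun p k =>
      if p = simpleRefl i k then (if k = finA i then (-1 : ℂ) else 1) else 0 := by
  have hA : ((finA i : Fin n) : ℕ) = i.val := rfl
  have hB : ((finB i : Fin n) : ℕ) = i.val + 1 := rfl
  ext p k
  simp only [sigmaMat, Matrix.sub_apply, Matrix.add_apply, Matrix.one_apply,
    Matrix.single, Matrix.of_apply, simpleRefl, Equiv.swap_apply_def]
  split_ifs <;> simp only [Fin.ext_iff, hA, hB] at * <;> first | omega | norm_num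

/-- Per-column inversion count: the number of `k > c` with `w k < w c`. -/
def colInv (w : Equiv.Perm (Fin n)) (c : Fin n) : ℕ :=
  (Finset.univ.filter fun k => c < k ∧ w k < w c).card

lemma colInv_one (c : Fin n) : colInv (1 : Equiv.Perm (Fin n)) c = 0 := by
  rw [colInv, Finset.card_eq_zero, Finset.filter_eq_empty_iff]
  intro k _
  simp only [Equiv.Perm.one_apply, not_and]
  exact fun h => asymm h

lemma colInv_step (i : Fin (n-1)) (v : Equiv.Perm (Fin n))
    (h : v⁻¹ (finA i) < v⁻¹ (finB i)) (c : Fin n) :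
    colInv (simpleRefl i * v) c = colInv v c + (if v c = finA i then 1 else 0) := by
  rcases eq_or_ne (v c) (finA i) with hvc | hvc
  · have hc : v⁻¹ (finA i) = c := by rw [← hvc, Equiv.Perm.inv_apply_self]
    have hck0 : c < v⁻¹ (finB i) := hc ▸ h
    rw [if_pos hvc, colInv, colInv]
    have hset : (Finset.univ.filter fun k =>
        c < k ∧ (simpleRefl i * v) k < (simpleRefl i * v) c)
        = insert (v⁻¹ (finB i)) (Finset.univ.filter fun k => c < k ∧ v k < v c) := by
      ext k
      simp only [Finset.mem_filter, Finset.mem_insert, Finset.mem_univ, true_and]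
      simp only [Equiv.Perm.mul_apply, simpleRefl]
      rcases eq_or_ne k (v⁻¹ (finB i)) with hk | hk
      · subst hk
        simp [hck0, hvc, Equiv.Perm.apply_inv_self, Equiv.swap_apply_right,
          Equiv.swap_apply_left, finA_lt_finB]
      · have hkb : v k ≠ finB i := fun hh => hk (by rw [← hh, Equiv.Perm.inv_apply_self])
        rw [swap_lt_iff i (v k) (v c)
          (fun hh => finA_ne_finB i (hvc.symm.trans hh.2))
          (fun hh => hkb hh.1)]
        simp [hk]
    rw [hset, Finset.card_insert_of_notMem]
    simp [hvc, Equiv.Perm.apply_inv_self, not_lt.2 (finA_lt_finB i).le]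
  · rw [if_neg hvc, add_zero, colInv, colInv]
    congr 1
    apply Finset.filter_congr
    intro k _
    simp only [Equiv.Perm.mul_apply, simpleRefl]
    refine and_congr_right fun hck => ?_
    apply swap_lt_iff
    · rintro ⟨h1, h2⟩
      have hk : v⁻¹ (finA i) = k := by rw [← h1, Equiv.Perm.inv_apply_self]
      have hcc : v⁻¹ (finB i) = c := by rw [← h2, Equiv.Perm.inv_apply_self]
      rw [hk, hcc] at h
      exact absurd hck (asymm h)
    · rintro ⟨_, h2⟩; exact hvc h2

lemma invCount_mul_simpleRefl (i : Fin (n-1)) (u : Equiv.Perm (Fin n)) :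
    (u⁻¹ (finA i) < u⁻¹ (finB i) ∧ invCount (simpleRefl i * u) = invCount u + 1) ∨
    (u⁻¹ (finB i) < u⁻¹ (finA i) ∧ invCount (simpleRefl i * u) + 1 = invCount u) := by
  have hne : u⁻¹ (finA i) ≠ u⁻¹ (finB i) := fun hh =>
    finA_ne_finB i (u⁻¹.injective hh)
  have key : ∀ p : Fin n × Fin n, p ≠ (u⁻¹ (finA i), u⁻¹ (finB i)) →
      p ≠ (u⁻¹ (finB i), u⁻¹ (finA i)) →
      ((p.1 < p.2 ∧ (simpleRefl i * u) p.2 < (simpleRefl i * u) p.1) ↔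
        (p.1 < p.2 ∧ u p.2 < u p.1)) := by
    intro p hp1 hp2
    refine and_congr_right fun _ => ?_
    simp only [Equiv.Perm.mul_apply, simpleRefl]
    apply swap_lt_iff
    · rintro ⟨h1, h2⟩
      exact hp2 (Prod.ext (by rw [← h2, Equiv.Perm.inv_apply_self])
        (by rw [← h1, Equiv.Perm.inv_apply_self]))
    · rintro ⟨h1, h2⟩
      exact hp1 (Prod.ext (by rw [← h2, Equiv.Perm.inv_apply_self])
        (by rw [← h1, Equiv.Perm.inv_apply_self]))
  rcases lt_or_gt_of_ne hne with h | h
  · left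
    refine ⟨h, ?_⟩
    rw [invCount, invCount]
    have hset : (Finset.univ.filter fun p : Fin n × Fin n =>
        p.1 < p.2 ∧ (simpleRefl i * u) p.2 < (simpleRefl i * u) p.1)
        = insert (u⁻¹ (finA i), u⁻¹ (finB i))
          (Finset.univ.filter fun p : Fin n × Fin n => p.1 < p.2 ∧ u p.2 < u p.1) := by
      ext p
      simp only [Finset.mem_filter, Finset.mem_insert, Finset.mem_univ, true_and]
      rcases eq_or_ne p (u⁻¹ (finA i), u⁻¹ (finB i)) with hp | hp
      · subst hp
        simp only [Equiv.Perm.mul_apply, simpleRefl, Equiv.Perm.apply_inv_self,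
          Equiv.swap_apply_right, Equiv.swap_apply_left]
        simp [h, finA_lt_finB i]
      · rcases eq_or_ne p (u⁻¹ (finB i), u⁻¹ (finA i)) with hp2 | hp2
        · subst hp2
          simp [not_lt.2 h.le, hp]
        · rw [key p hp hp2]
          simp [hp]
    rw [hset, Finset.card_insert_of_notMem]
    simp [Equiv.Perm.apply_inv_self, not_lt.2 (finA_lt_finB i).le]
  · right
    refine ⟨h, ?_⟩
    rw [invCount, invCount]
    have hset : (Finset.univ.filter fun p : Fin n × Fin n =>
        p.1 < p.2 ∧ u p.2 < u p.1)
        = insert (u⁻¹ (finB i), u⁻¹ (finA i))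
          (Finset.univ.filter fun p : Fin n × Fin n =>
            p.1 < p.2 ∧ (simpleRefl i * u) p.2 < (simpleRefl i * u) p.1) := by
      ext p
      simp only [Finset.mem_filter, Finset.mem_insert, Finset.mem_univ, true_and]
      rcases eq_or_ne p (u⁻¹ (finB i), u⁻¹ (finA i)) with hp2 | hp2
      · subst hp2
        simp only [Equiv.Perm.apply_inv_self]
        simp [h, finA_lt_finB i]
      · rcases eq_or_ne p (u⁻¹ (finA i), u⁻¹ (finB i)) with hp | hp
        · subst hp
          simp [not_lt.2 h.le, hp2]
        · rw [key p hp hp2]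
          simp [hp2]
    rw [hset, Finset.card_insert_of_notMem]
    simp only [Finset.mem_filter, Finset.mem_univ, true_and]
    simp only [Equiv.Perm.mul_apply,
      simpleRefl, Equiv.Perm.apply_inv_self, Equiv.swap_apply_left, Equiv.swap_apply_right,
      not_and]
    exact fun _ => not_lt.2 (finA_lt_finB i).le

lemma card_filter_lt (c : Fin n) :
    (Finset.univ.filter fun k : Fin n => k < c).card = (c : ℕ) := by
  have : (Finset.univ.filter fun k : Fin n => k < c) = Finset.Iio c := by
    ext k; simp
  rw [this, Fin.card_Iio]

lemma colInv_parity (w : Equiv.Perm (Fin n)) (c : Fin n) :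
    colInv w⁻¹ (w c) + colInv w c +
      2 * ((Finset.univ.filter fun k => k < c ∧ w k < w c).card)
      = (c : ℕ) + (w c : ℕ) := by
  set A := (Finset.univ.filter fun k => k < c ∧ w k < w c).card with hA
  have ha : (c : ℕ) = A +
      (Finset.univ.filter fun k => k < c ∧ w c < w k).card := by
    rw [← card_filter_lt c,
      ← Finset.card_filter_add_card_filter_not
        (s := Finset.univ.filter fun k : Fin n => k < c) (p := fun k => w k < w c)]
    congr 1
    · rw [Finset.filter_filter]
    · rw [Finset.filter_filter]
      apply congrArg Finset.card
      apply Finset.filter_congr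
      intro k _
      refine and_congr_right fun hk => ?_
      constructor
      · intro hh
        exact lt_of_le_of_ne (not_lt.1 hh) fun he => (ne_of_lt hk) (w.injective he.symm)
      · exact fun hh => not_lt.2 hh.le
  have hb : ((w c : ℕ)) = A + colInv w c := by
    have hbij : (Finset.univ.filter fun k : Fin n => w k < w c).card
        = (Finset.univ.filter fun k : Fin n => k < w c).card := by
      apply Finset.card_bij (fun k _ => w k)
      · intro a ha; simp only [Finset.mem_filter, Finset.mem_univ, true_and] at *; exact ha
      · intro a _ b _ hab; exact w.injective hab
      · intro b hb
        refine ⟨w⁻¹ b, ?_, by simp⟩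
        simp only [Finset.mem_filter, Finset.mem_univ, true_and,
          Equiv.Perm.apply_inv_self] at *
        exact hb
    rw [← card_filter_lt (w c), ← hbij,
      ← Finset.card_filter_add_card_filter_not
        (s := Finset.univ.filter fun k : Fin n => w k < w c) (p := fun k => k < c)]
    congr 1
    · rw [Finset.filter_filter]
      apply congrArg Finset.card
      apply Finset.filter_congr
      intro k _
      exact and_comm
    · rw [Finset.filter_filter, colInv]
      apply congrArg Finset.card
      apply Finset.filter_congr
      intro k _
      constructor
      · rintro ⟨h1, h2⟩
        refine ⟨lt_of_le_of_ne (not_lt.1 h2) ?_, h1⟩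
        intro he; exact (ne_of_lt h1) (he ▸ rfl)
      · rintro ⟨h1, h2⟩; exact ⟨h2, not_lt.2 h1.le⟩
  have hc : colInv w⁻¹ (w c) =
      (Finset.univ.filter fun k => k < c ∧ w c < w k).card := by
    rw [colInv]
    apply Finset.card_bij (fun k _ => w⁻¹ k)
    · intro a ha
      simp only [Finset.mem_filter, Finset.mem_univ, true_and, Equiv.Perm.inv_apply_self,
        Equiv.Perm.apply_inv_self] at *
      exact ⟨ha.2, ha.1⟩
    · intro a _ b _ hab; exact w⁻¹.injective hab
    · intro b hb
      refine ⟨w b, ?_, by simp⟩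
      simp only [Finset.mem_filter, Finset.mem_univ, true_and,
        Equiv.Perm.inv_apply_self] at *
      exact ⟨hb.2, hb.1⟩
  omega

/-- The monomial matrix attached to reduced words of `w`. -/
def Mmat (n : ℕ) (w : Equiv.Perm (Fin n)) : Matrix (Fin n) (Fin n) ℂ :=
  Matrix.of fun p q => if p = w q then (-1 : ℂ) ^ (colInv w q) else 0

lemma Mmat_one : Mmat n 1 = 1 := by
  ext p q
  simp [Mmat, colInv_one, Matrix.one_apply, eq_comm]

lemma sigma_mul_Mmat (i : Fin (n-1)) (v : Equiv.Perm (Fin n))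
    (h : v⁻¹ (finA i) < v⁻¹ (finB i)) :
    sigmaMat n i * Mmat n v = Mmat n (simpleRefl i * v) := by
  ext p q
  rw [Matrix.mul_apply, Finset.sum_eq_single (v q)]
  · rw [sigma_eq]
    simp only [Mmat, Matrix.of_apply, Equiv.Perm.mul_apply, if_pos rfl]
    rw [colInv_step i v h q]
    rcases eq_or_ne (v q) (finA i) with hv | hv
    · rw [if_pos hv, if_pos hv]
      split_ifs with h1
      · simp [h1, pow_succ]
      · simp [h1]
    · rw [if_neg hv, if_neg hv, add_zero]
      split_ifs with h1 <;> simp [h1]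
  · intro k _ hk
    have hz : Mmat n v k q = 0 := by
      simp only [Mmat, Matrix.of_apply]
      rw [if_neg]
      intro hh
      exact hk hh
    rw [hz, mul_zero]
  · intro hk; exact absurd (Finset.mem_univ (v q)) hk

lemma Mmat_mul_transpose (w : Equiv.Perm (Fin n)) : Mmat n w * (Mmat n w)ᵀ = 1 := by
  ext p q
  rw [Matrix.mul_apply, Finset.sum_eq_single (w⁻¹ p)]
  · simp only [Mmat, Matrix.transpose_apply, Matrix.of_apply, Equiv.Perm.apply_inv_self,
      eq_self_iff_true, if_true, Matrix.one_apply]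
    rcases eq_or_ne p q with h | h
    · subst h
      rw [if_pos rfl, if_pos rfl, ← pow_add]
      exact Even.neg_one_pow ⟨_, rfl⟩
    · rw [if_neg (fun hh : q = p => h hh.symm), if_neg h, mul_zero]
  · intro k _ hk
    have hz : Mmat n w p k = 0 := by
      simp only [Mmat, Matrix.of_apply]
      rw [if_neg]
      intro hh
      exact hk (by rw [hh, Equiv.Perm.inv_apply_self])
    rw [hz, zero_mul]
  · intro hk; exact absurd (Finset.mem_univ (w⁻¹ p)) hk

lemma transpose_mul_Mmat (w : Equiv.Perm (Fin n)) : (Mmat n w)ᵀ * Mmat n w = 1 := by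
  ext p q
  rw [Matrix.mul_apply, Finset.sum_eq_single (w p)]
  · simp only [Mmat, Matrix.transpose_apply, Matrix.of_apply, eq_self_iff_true, if_true,
      Matrix.one_apply]
    rcases eq_or_ne p q with h | h
    · subst h
      rw [if_pos rfl, if_pos rfl, ← pow_add]
      exact Even.neg_one_pow ⟨_, rfl⟩
    · rw [if_neg (fun hh : w p = w q => h (w.injective hh)), mul_zero,
        if_neg h]
  · intro k _ hk
    have hz : Mmat n w k p = 0 := by
      simp only [Mmat, Matrix.of_apply]
      rw [if_neg]
      intro hh
      exact hk hh
    rw [Matrix.transpose_apply, hz, zero_mul]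
  · intro hk; exact absurd (Finset.mem_univ (w p)) hk

lemma wordPerm_cons (i : Fin (n-1)) (l : List (Fin (n-1))) :
    wordPerm (i :: l) = simpleRefl i * wordPerm l := by
  simp [wordPerm]

lemma wordMat_cons (i : Fin (n-1)) (l : List (Fin (n-1))) :
    wordMat n (i :: l) = sigmaMat n i * wordMat n l := by
  simp [wordMat]

lemma invCount_one : invCount (1 : Equiv.Perm (Fin n)) = 0 := by
  rw [invCount, Finset.card_eq_zero, Finset.filter_eq_empty_iff]
  intro p _
  simp only [Equiv.Perm.one_apply, not_and]
  exact fun h => asymm h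

lemma invCount_wordPerm_le (l : List (Fin (n-1))) :
    invCount (wordPerm (n := n) l) ≤ l.length := by
  induction l with
  | nil =>
    have : wordPerm (n := n) [] = 1 := by simp [wordPerm]
    simp [this, invCount_one]
  | cons i l ih =>
    rw [wordPerm_cons]
    rcases invCount_mul_simpleRefl i (wordPerm l) with ⟨_, h⟩ | ⟨_, h⟩ <;>
      simp only [List.length_cons] <;> omega

lemma wordMat_eq_Mmat : ∀ (l : List (Fin (n-1))) (w : Equiv.Perm (Fin n)),
    wordPerm l = w → l.length = invCount w → wordMat n l = Mmat n w := by
  intro l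
  induction l with
  | nil =>
    intro w h1 _
    have hw : w = 1 := by rw [← h1]; simp [wordPerm]
    subst hw
    have : wordMat n [] = 1 := by simp [wordMat]
    rw [this, Mmat_one]
  | cons i l ih =>
    intro w h1 h2
    rw [wordPerm_cons] at h1
    rcases invCount_mul_simpleRefl i (wordPerm l) with ⟨hlt, heq⟩ | ⟨hlt, heq⟩
    · have hle := invCount_wordPerm_le (n := n) l
      rw [h1] at heq
      simp only [List.length_cons] at h2
      have hlen : l.length = invCount (wordPerm (n := n) l) := by omega
      rw [wordMat_cons, ih (wordPerm l) rfl hlen, sigma_mul_Mmat i _ hlt, h1]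
    · have hle := invCount_wordPerm_le (n := n) l
      rw [h1] at heq
      simp only [List.length_cons] at h2
      omega

end ChevAux

/-- If `(i₁,…,i_ℓ)` is a reduced word for `w ∈ Sₙ` and `(j₁,…,j_m)` a
reduced word for `w⁻¹`, then the pinned Chevalley involution
`C_P(g) = d·(gᵀ)⁻¹·d⁻¹` (with `d = diag((−1)^{k−1})`) satisfies
`C_P(σ(i₁,…,i_ℓ)) = σ(j₁,…,j_m)⁻¹`. -/
theorem chevalley_of_tits_representative (n : ℕ) (hn : 1 ≤ n) (w : Equiv.Perm (Fin n))
    (l m : List (Fin (n - 1))) (hl : IsReducedWord l w) (hm : IsReducedWord m w⁻¹) :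
    dMat n * ((wordMat n l)ᵀ)⁻¹ * (dMat n)⁻¹ = (wordMat n m)⁻¹ := by
  obtain ⟨hl1, hl2⟩ := hl
  obtain ⟨hm1, hm2⟩ := hm
  rw [wordMat_eq_Mmat l w hl1 hl2, wordMat_eq_Mmat m w⁻¹ hm1 hm2]
  have hD : dMat n * dMat n = 1 := by
    rw [dMat, Matrix.diagonal_mul_diagonal]
    have : (fun k : Fin n => (-1 : ℂ) ^ (k : ℕ) * (-1) ^ (k : ℕ)) = fun _ => 1 := by
      funext k
      rw [← pow_add]
      exact Even.neg_one_pow ⟨_, rfl⟩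
    rw [this, Matrix.diagonal_one]
  have hDinv : (dMat n)⁻¹ = dMat n := Matrix.inv_eq_right_inv hD
  have hT : ((Mmat n w)ᵀ)⁻¹ = Mmat n w := Matrix.inv_eq_right_inv (transpose_mul_Mmat w)
  have hI : (Mmat n w⁻¹)⁻¹ = (Mmat n w⁻¹)ᵀ :=
    Matrix.inv_eq_right_inv (Mmat_mul_transpose w⁻¹)
  rw [hT, hDinv, hI]
  ext p q
  rw [show dMat n * Mmat n w * dMat n = dMat n * (Mmat n w * dMat n) from by
    rw [Matrix.mul_assoc]]
  rw [dMat, Matrix.diagonal_mul, Matrix.mul_diagonal]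
  simp only [Mmat, Matrix.transpose_apply, Matrix.of_apply]
  rcases eq_or_ne p (w q) with hpq | hpq
  · rw [if_pos hpq, if_pos (by rw [hpq, Equiv.Perm.inv_apply_self])]
    subst hpq
    have hpar := colInv_parity w q
    set A := ((Finset.univ.filter fun k => k < q ∧ w k < w q).card) with hA
    have hexp : ((w q : ℕ)) + (colInv w q + (q : ℕ))
        = colInv w⁻¹ (w q) + 2 * (colInv w q + A) := by omega
    rw [← pow_add, ← pow_add, hexp, pow_add, pow_mul]
    norm_num
  · rw [if_neg hpq, if_neg (fun hh : q = w⁻¹ p => hpq (by rw [hh, Equiv.Perm.apply_inv_self]))]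
    ring
end

section
/- Suppose w ∈ Sₙ satisfies w² = 1, and g ∈ GL(n,ℂ) is a monomial matrix representing w, i.e. for each k the vector g·e_k is a nonzero scalar multiple of e_{w(k)}. Then there exists an invertible diagonal matrix t such that t·C_P(g)·t⁻¹ = g⁻¹. -/
open Matrix

/-- If `w ∈ Sₙ` is an involution and `g ∈ GL(n,ℂ)` is a monomial matrix
representing `w` (each `g·e_k` is a nonzero multiple of `e_{w(k)}`), then `C_P(g)`
is conjugate to `g⁻¹` by an invertible diagonal matrix, where
`C_P(g) = d·(gᵀ)⁻¹·d⁻¹` with `d = diag((−1)^{k−1})`. -/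
theorem chevalley_of_monomial_involution (n : ℕ) (hn : 1 ≤ n) (w : Equiv.Perm (Fin n))
    (hw : w * w = 1) (g : GL (Fin n) ℂ)
    (hg : ∀ k : Fin n, ∃ c : ℂ, c ≠ 0 ∧
      (g : Matrix (Fin n) (Fin n) ℂ) *ᵥ (Pi.single k 1 : Fin n → ℂ) =
        c • (Pi.single (w k) 1 : Fin n → ℂ)) :
    ∃ t : Matrix (Fin n) (Fin n) ℂ, t.IsDiag ∧ IsUnit t ∧
      t * (dMat n * (((g : Matrix (Fin n) (Fin n) ℂ))ᵀ)⁻¹ * (dMat n)⁻¹) * t⁻¹ =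
        ((g⁻¹ : GL (Fin n) ℂ) : Matrix (Fin n) (Fin n) ℂ) := by
  classical
  set G : Matrix (Fin n) (Fin n) ℂ := (g : Matrix (Fin n) (Fin n) ℂ) with hG
  set Ginv : Matrix (Fin n) (Fin n) ℂ := ((g⁻¹ : GL (Fin n) ℂ) : Matrix (Fin n) (Fin n) ℂ) with hGinv
  have hGG : G * Ginv = 1 := by exact_mod_cast Units.mul_inv g
  have hGG' : Ginv * G = 1 := by exact_mod_cast Units.inv_mul g
  have hwinv : ∀ k, w (w k) = k := fun k => by
    rw [← Equiv.Perm.mul_apply, hw, Equiv.Perm.one_apply]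
  -- choose the scalars
  choose c hc hcol using hg
  have gentry : ∀ j k, G j k = if j = w k then c k else 0 := by
    intro j k
    have := congrFun (hcol k) j
    simpa [mulVec, dotProduct, Pi.single_apply, eq_comm] using this
  -- the diagonal matrices
  set e : Matrix (Fin n) (Fin n) ℂ := diagonal (fun k => (c k)⁻¹) with he
  set einv : Matrix (Fin n) (Fin n) ℂ := diagonal c with heinv
  have hee : e * einv = 1 := by
    rw [he, heinv, diagonal_mul_diagonal]
    convert diagonal_one
    exact inv_mul_cancel₀ (hc _)
  -- key identity  G * e = e * Gᵀ
  have hkey : G * e = e * Gᵀ := by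
    ext j k
    rw [he, mul_diagonal, diagonal_mul, transpose_apply, gentry j k, gentry k j]
    by_cases h : j = w k
    · have h' : k = w j := by rw [h, hwinv]
      rw [if_pos h, if_pos h', mul_inv_cancel₀ (hc k), inv_mul_cancel₀ (hc j)]
    · have h' : ¬ k = w j := fun hkj => h (by rw [hkj, hwinv])
      rw [if_neg h, if_neg h']
      ring
  -- consequence: e * Ginvᵀ * einv = Ginv
  have h1 : Ginv * e * Gᵀ = e := by
    rw [mul_assoc, ← hkey, ← mul_assoc, hGG', one_mul]
  have hGt : Gᵀ * Ginvᵀ = 1 := by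
    rw [← transpose_mul, hGG', transpose_one]
  have h2 : Ginv * e = e * Ginvᵀ := by
    calc Ginv * e = Ginv * e * (Gᵀ * Ginvᵀ) := by rw [hGt, mul_one]
    _ = (Ginv * e * Gᵀ) * Ginvᵀ := by rw [← mul_assoc]
    _ = e * Ginvᵀ := by rw [h1]
  have h3 : e * Ginvᵀ * einv = Ginv := by
    rw [← h2, mul_assoc, hee, mul_one]
  -- compute (Gᵀ)⁻¹ = Ginvᵀ
  have hGtinv : (Gᵀ)⁻¹ = Ginvᵀ := inv_eq_right_inv hGt
  -- d matrix facts
  have hneg : ∀ k : Fin n, ((-1 : ℂ)) ^ (k : ℕ) * (-1) ^ (k : ℕ) = 1 := by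
    intro k
    rw [← pow_add, ← two_mul, pow_mul]
    norm_num
  have hdd : dMat n * dMat n = 1 := by
    rw [dMat, diagonal_mul_diagonal]
    convert diagonal_one
    exact hneg _
  have hdinv : (dMat n)⁻¹ = dMat n := inv_eq_right_inv hdd
  -- define t
  set t : Matrix (Fin n) (Fin n) ℂ := diagonal (fun k => (-1 : ℂ) ^ (k : ℕ) * (c k)⁻¹) with ht
  set tinv : Matrix (Fin n) (Fin n) ℂ := diagonal (fun k => (-1 : ℂ) ^ (k : ℕ) * c k) with htinv
  have htt : t * tinv = 1 := by
    rw [ht, htinv, diagonal_mul_diagonal]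
    have f1 : (fun k : Fin n => (-1:ℂ)^(k:ℕ)*(c k)⁻¹ * ((-1)^(k:ℕ)*c k)) = fun _ => (1:ℂ) :=
      funext fun k => by rw [mul_mul_mul_comm, hneg k, one_mul, inv_mul_cancel₀ (hc k)]
    rw [f1, diagonal_one]
  have htt' : tinv * t = 1 := by
    rw [ht, htinv, diagonal_mul_diagonal]
    have f1 : (fun k : Fin n => (-1:ℂ)^(k:ℕ)*c k * ((-1)^(k:ℕ)*(c k)⁻¹)) = fun _ => (1:ℂ) :=
      funext fun k => by rw [mul_mul_mul_comm, hneg k, one_mul, mul_inv_cancel₀ (hc k)]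
    rw [f1, diagonal_one]
  have htd : t * dMat n = e := by
    rw [ht, dMat, he, diagonal_mul_diagonal]
    have f1 : (fun k : Fin n => (-1:ℂ)^(k:ℕ)*(c k)⁻¹ * (-1)^(k:ℕ)) = fun k : Fin n => (c k)⁻¹ :=
      funext fun k => by rw [mul_comm ((-1:ℂ)^(k:ℕ)) ((c k)⁻¹), mul_assoc, hneg k, mul_one]
    rw [f1]
  have hdt : dMat n * tinv = einv := by
    rw [htinv, dMat, heinv, diagonal_mul_diagonal]
    have f1 : (fun k : Fin n => (-1:ℂ)^(k:ℕ)*((-1)^(k:ℕ)*c k)) = fun k : Fin n => c k :=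
      funext fun k => by rw [← mul_assoc, hneg k, one_mul]
    rw [f1]
  refine ⟨t, isDiag_diagonal _, (Units.isUnit ⟨t, tinv, htt, htt'⟩), ?_⟩
  rw [inv_eq_right_inv htt, hGtinv, hdinv]
  calc t * (dMat n * Ginvᵀ * dMat n) * tinv
      = (t * dMat n) * Ginvᵀ * (dMat n * tinv) := by simp only [mul_assoc]
    _ = e * Ginvᵀ * einv := by rw [htd, hdt]
    _ = Ginv := h3
end

section
/- A group homomorphism φ : W_ℝ → GL(n,ℂ) admits a nondegenerate invariant Hermitian form if and only if φ is equivalent to its Hermitian dual φ^h. That is: there exists an invertible n×n complex matrix M with Mᴴ = M and φ(w)ᴴ·M·φ(w) = M for all w ∈ W_ℝ, if and only if there exists P ∈ GL(n,ℂ) with P·φ(w)·P⁻¹ = (φ(w)ᴴ)⁻¹ for all w ∈ W_ℝ. -/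
open Quaternion
open scoped Quaternion

noncomputable section

/-- The quaternion `j`. -/
def jq : ℍ[ℝ] := ⟨0, 0, 1, 0⟩

lemma jq_mul_jq : jq * jq = -1 := by
  ext <;> simp only [Quaternion.re_mul, Quaternion.imI_mul, Quaternion.imJ_mul, Quaternion.imK_mul] <;> simp [jq]

lemma jq_ne_zero : jq ≠ 0 := by
  intro h
  have := congrArg QuaternionAlgebra.imJ h
  simp [jq] at this

lemma coeComplex_ne_zero {z : ℂ} (hz : z ≠ 0) : (z : ℍ[ℝ]) ≠ 0 := by
  intro h
  apply hz
  have hre := congrArg QuaternionAlgebra.re h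
  have him := congrArg QuaternionAlgebra.imI h
  simp at hre him
  exact Complex.ext hre him

lemma coeComplex_neg (z : ℂ) : ((-z : ℂ) : ℍ[ℝ]) = -(z : ℍ[ℝ]) := by
  ext <;> simp

lemma coeComplex_inv (z : ℂ) : ((z⁻¹ : ℂ) : ℍ[ℝ]) = ((z : ℍ[ℝ]))⁻¹ := by
  have h := map_inv₀ Quaternion.ofComplex z
  rwa [Quaternion.coe_ofComplex] at h

lemma jq_mul_coeComplex (z : ℂ) : jq * (z : ℍ[ℝ]) = ((starRingEnd ℂ) z : ℂ) * jq := by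
  ext <;> simp only [Quaternion.re_mul, Quaternion.imI_mul, Quaternion.imJ_mul, Quaternion.imK_mul] <;> simp [jq]

/-- The real Weil group `W_ℝ`, realized inside the unit group of the Hamilton quaternions:
the subgroup of `ℍˣ` consisting of all (nonzero) elements of the form `z` or `z·j` with
`z ∈ ℂˣ`. -/
def WeilR : Subgroup (ℍ[ℝ])ˣ where
  carrier := {w | ∃ z : ℂ, z ≠ 0 ∧
    ((w : ℍ[ℝ]) = (z : ℍ[ℝ]) ∨ (w : ℍ[ℝ]) = (z : ℍ[ℝ]) * jq)}
  one_mem' := ⟨1, one_ne_zero, Or.inl (by simp)⟩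
  mul_mem' := by
    rintro a b ⟨z, hz, hza | hza⟩ ⟨w, hw, hwb | hwb⟩
    · exact ⟨z * w, mul_ne_zero hz hw, Or.inl (by push_cast [Units.val_mul, hza, hwb]; ring)⟩
    · exact ⟨z * w, mul_ne_zero hz hw, Or.inr (by
        push_cast [Units.val_mul, hza, hwb]; rw [mul_assoc])⟩
    · exact ⟨z * (starRingEnd ℂ) w, mul_ne_zero hz (by simpa using hw), Or.inr (by
        push_cast [Units.val_mul, hza, hwb]
        rw [mul_assoc, jq_mul_coeComplex w]
        rw [mul_assoc])⟩
    · exact ⟨-(z * (starRingEnd ℂ) w), neg_ne_zero.mpr (mul_ne_zero hz (by simpa using hw)),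
        Or.inl (by
          push_cast [Units.val_mul, hza, hwb]
          rw [mul_assoc, ← mul_assoc jq, jq_mul_coeComplex w, mul_assoc, jq_mul_jq,
            coeComplex_neg, coeComplex_mul]
          simp [mul_neg, mul_assoc])⟩
  inv_mem' := by
    rintro a ⟨z, hz, hza | hza⟩
    · refine ⟨z⁻¹, inv_ne_zero hz, Or.inl ?_⟩
      rw [Units.val_inv_eq_inv_val, hza, coeComplex_inv]
    · refine ⟨-(((starRingEnd ℂ) z)⁻¹),
        neg_ne_zero.mpr (inv_ne_zero (by simpa using hz)), Or.inr ?_⟩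
      rw [Units.val_inv_eq_inv_val, hza]
      refine inv_eq_of_mul_eq_one_right ?_
      rw [mul_assoc, ← mul_assoc jq, jq_mul_coeComplex, mul_assoc, jq_mul_jq]
      have : (starRingEnd ℂ) (-(((starRingEnd ℂ) z)⁻¹)) = -(z⁻¹) := by simp
      rw [this, coeComplex_neg, coeComplex_inv]
      simp [mul_neg, neg_mul]
      rw [mul_inv_cancel₀ (coeComplex_ne_zero hz)]

/-- The element `z ∈ ℂˣ ⊂ W_ℝ`. -/
def cqW (z : ℂ) (hz : z ≠ 0) : WeilR :=
  ⟨Units.mk0 (z : ℍ[ℝ]) (coeComplex_ne_zero hz), ⟨z, hz, Or.inl rfl⟩⟩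

/-- The element `j ∈ W_ℝ`. -/
def jW : WeilR :=
  ⟨Units.mk0 jq jq_ne_zero, ⟨1, one_ne_zero, Or.inr (by simp)⟩⟩

/-- The element `z·j ∈ W_ℝ` for `z ∈ ℂˣ`. -/
def zjW (z : ℂ) (hz : z ≠ 0) : WeilR :=
  ⟨Units.mk0 ((z : ℍ[ℝ]) * jq) (mul_ne_zero (coeComplex_ne_zero hz) jq_ne_zero),
    ⟨z, hz, Or.inr rfl⟩⟩

end

open Matrix

/-- A group homomorphism `φ : W_ℝ → GL(n,ℂ)` admits a nondegenerate
invariant Hermitian form if and only if `φ` is equivalent to its Hermitian dual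
`φ^h = w ↦ (φ(w)ᴴ)⁻¹`. -/
theorem weil_rep_hermitian_iff_equiv_hermitian_dual (n : ℕ) (hn : 1 ≤ n)
    (φ : WeilR →* GL (Fin n) ℂ) :
    (∃ M : Matrix (Fin n) (Fin n) ℂ, IsUnit M ∧ Mᴴ = M ∧
      ∀ w : WeilR, (φ w : Matrix (Fin n) (Fin n) ℂ)ᴴ * M * (φ w : Matrix (Fin n) (Fin n) ℂ) = M)
    ↔
    (∃ P : GL (Fin n) ℂ, ∀ w : WeilR,
      (P : Matrix (Fin n) (Fin n) ℂ) * (φ w : Matrix (Fin n) (Fin n) ℂ) *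
          ((P⁻¹ : GL (Fin n) ℂ) : Matrix (Fin n) (Fin n) ℂ) =
        ((φ w : Matrix (Fin n) (Fin n) ℂ)ᴴ)⁻¹) := by
  have hinvH : ∀ w : WeilR,
      (φ w : Matrix (Fin n) (Fin n) ℂ)ᴴ * ((φ w : Matrix (Fin n) (Fin n) ℂ)ᴴ)⁻¹ = 1 := by
    intro w
    exact Matrix.mul_nonsing_inv _
      ((Matrix.isUnit_iff_isUnit_det _).mp ((Matrix.isUnit_conjTranspose _).mpr (φ w).isUnit))
  constructor
  · rintro ⟨M, hM, hherm, hinv⟩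
    refine ⟨hM.unit, fun w => ?_⟩
    set φw := (φ w : Matrix (Fin n) (Fin n) ℂ)
    have h1 : ((hM.unit⁻¹ : (Matrix (Fin n) (Fin n) ℂ)ˣ) : Matrix (Fin n) (Fin n) ℂ) = M⁻¹ :=
      Matrix.coe_units_inv hM.unit
    have h2 : (hM.unit : Matrix (Fin n) (Fin n) ℂ) = M := hM.unit_spec
    rw [h1, h2]
    symm
    apply Matrix.inv_eq_right_inv
    have : φwᴴ * (M * φw * M⁻¹) = (φwᴴ * M * φw) * M⁻¹ := by simp only [mul_assoc]
    rw [this, hinv w, Matrix.mul_nonsing_inv _ ((Matrix.isUnit_iff_isUnit_det _).mp hM)]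
  · rintro ⟨P, hP⟩
    set Pm := (P : Matrix (Fin n) (Fin n) ℂ) with hPm
    set Pinv := ((P⁻¹ : GL (Fin n) ℂ) : Matrix (Fin n) (Fin n) ℂ) with hPinv
    have hPP : Pinv * Pm = 1 := by
      rw [hPm, hPinv, ← Units.val_mul, inv_mul_cancel, Units.val_one]
    have key : ∀ w : WeilR, (φ w : Matrix (Fin n) (Fin n) ℂ)ᴴ * Pm *
        (φ w : Matrix (Fin n) (Fin n) ℂ) = Pm := by
      intro w
      set φw := (φ w : Matrix (Fin n) (Fin n) ℂ)
      have e : Pm * φw = (φwᴴ)⁻¹ * Pm := by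
        have := congrArg (· * Pm) (hP w)
        simpa [mul_assoc, hPP] using this
      rw [mul_assoc, e, ← mul_assoc, hinvH w, one_mul]
    have keyH : ∀ w : WeilR, (φ w : Matrix (Fin n) (Fin n) ℂ)ᴴ * Pmᴴ *
        (φ w : Matrix (Fin n) (Fin n) ℂ) = Pmᴴ := by
      intro w
      have := congrArg Matrix.conjTranspose (key w)
      simpa [Matrix.conjTranspose_mul, mul_assoc] using this
    -- polynomial argument to find a real t with Pm + Pmᴴ + (t*I)•(Pm - Pmᴴ) invertible
    set q : Polynomial ℂ :=
      ((Pm + Pmᴴ).map Polynomial.C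
        + (Polynomial.X * Polynomial.C Complex.I) • ((Pm - Pmᴴ).map Polynomial.C)).det with hq
    have heval : ∀ t : ℂ, q.eval t = ((Pm + Pmᴴ) + (t * Complex.I) • (Pm - Pmᴴ)).det := by
      intro t
      rw [hq, ← Polynomial.coe_evalRingHom, RingHom.map_det]
      congr 1
      ext i j
      simp [Matrix.map_apply, Matrix.add_apply, Matrix.smul_apply, Matrix.sub_apply]
      exact Or.inl (mul_comm _ _)
    have hq0 : q ≠ 0 := by
      intro h0
      have hI : q.eval Complex.I ≠ 0 := by
        rw [heval]
        have : (Pm + Pmᴴ) + (Complex.I * Complex.I) • (Pm - Pmᴴ) = (2 : ℂ) • Pmᴴ := by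
          rw [Complex.I_mul_I]
          module
        rw [this, Matrix.det_smul]
        refine mul_ne_zero (pow_ne_zero _ two_ne_zero) ?_
        have : IsUnit Pmᴴ := (Matrix.isUnit_conjTranspose _).mpr P.isUnit
        exact ((Matrix.isUnit_iff_isUnit_det _).mp this).ne_zero
      rw [h0] at hI
      simp at hI
    obtain ⟨t, ht⟩ : ∃ t : ℝ, ¬ q.IsRoot (t : ℂ) := by
      have hfin : Set.Finite {t : ℝ | q.IsRoot (t : ℂ)} := by
        have := Polynomial.finite_setOf_isRoot hq0
        exact Set.Finite.preimage (Set.injOn_of_injective Complex.ofReal_injective) this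
      obtain ⟨t, ht⟩ := hfin.infinite_compl.nonempty
      exact ⟨t, ht⟩
    refine ⟨(Pm + Pmᴴ) + ((t : ℂ) * Complex.I) • (Pm - Pmᴴ), ?_, ?_, ?_⟩
    · rw [Matrix.isUnit_iff_isUnit_det, ← heval, isUnit_iff_ne_zero]
      exact ht
    · rw [Matrix.conjTranspose_add, Matrix.conjTranspose_smul, Matrix.conjTranspose_add,
        Matrix.conjTranspose_sub, Matrix.conjTranspose_conjTranspose]
      have hst : star ((t : ℂ) * Complex.I) = -((t : ℂ) * Complex.I) := by
        simp [Complex.ext_iff]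
      rw [hst]
      module
    · intro w
      set φw := (φ w : Matrix (Fin n) (Fin n) ℂ)
      have k1 := key w
      have k2 := keyH w
      simp only [Matrix.mul_add, Matrix.add_mul, Matrix.mul_sub, Matrix.sub_mul,
        mul_add, add_mul, mul_sub, sub_mul, mul_smul_comm, smul_mul_assoc] at *
      rw [k1, k2]
end
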